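/- Let B be a finitely generated additive submonoid of the nonnegative real numbers, and let a : ℕ × B → ℂ be a family of complex numbers. Assume that there exists a real number r with 0 < r < 1 such that the family (|a(m,n)| · r^m · r^n)_{(m,n)∈ℕ×B} is summable (where r^n for real n ≥ 0 denotes the real power). Assume moreover that there exist a subset T of the positive reals whose closure contains 0 and a real number ε > 0 such that for every t ∈ T with t < ε, the family (a(m,n) · t^m · (exp(−t^{−2}))^n)_{(m,n)∈ℕ×B} is summable with sum equal to 0. Then a(m,n) = 0 for all (m,n) ∈ ℕ × B. -/

import Mathlib

open Filter Topology

lemma bdd_finite (B : AddSubmonoid ℝ) (hBnonneg : ∀ x ∈ B, 0 ≤ x) (hBfg : B.FG) (C : ℝ) :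
    {x : ℝ | x ∈ B ∧ x ≤ C}.Finite := by
  obtain ⟨S, hS⟩ := hBfg
  set P : Finset ℝ := S.filter (fun s => 0 < s) with hP
  set δ₀ : ℝ := if h : P.Nonempty then P.min' h else 1 with hδ₀
  have hδ₀pos : 0 < δ₀ := by
    rw [hδ₀]
    split_ifs with h
    · exact (Finset.mem_filter.mp (P.min'_mem h)).2
    · norm_num
  have hδ₀le : ∀ s ∈ S, s ≠ 0 → δ₀ ≤ s := by
    intro s hs hs0
    have hsB : s ∈ B := hS ▸ AddSubmonoid.subset_closure hs
    have hspos : 0 < s := lt_of_le_of_ne (hBnonneg s hsB) (Ne.symm hs0)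
    have hsP : s ∈ P := Finset.mem_filter.mpr ⟨hs, hspos⟩
    rw [hδ₀, dif_pos ⟨s, hsP⟩]
    exact Finset.min'_le _ _ hsP
  set K : ℕ := ⌈C / δ₀⌉₊ with hK
  have key : {x : ℝ | x ∈ B ∧ x ≤ C} ⊆
      (fun f : ↥S → ℕ => ∑ s : ↥S, (f s : ℝ) * (s : ℝ)) ''
        (Set.pi Set.univ (fun _ : ↥S => Set.Iic K)) := by
    rintro x ⟨hxB, hxC⟩
    obtain ⟨l, hlS, hlsum⟩ := AddSubmonoid.exists_multiset_of_mem_closure (hS ▸ hxB)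
    refine ⟨fun s => if (s : ℝ) = 0 then 0 else l.count (s : ℝ), ?_, ?_⟩
    · intro s _
      simp only [Set.mem_Iic]
      split_ifs with h0
      · exact Nat.zero_le _
      · -- count s • s ≤ x ≤ C
        by_cases hsl : (s : ℝ) ∈ l
        · have hterm : l.count (s : ℝ) • (s : ℝ) ≤ l.sum := by
            rw [Finset.sum_multiset_count l]
            refine Finset.single_le_sum (f := fun a => l.count a • a) ?_
              (Multiset.mem_toFinset.mpr hsl)
            intro a ha
            have haB : a ∈ B := hS ▸ AddSubmonoid.subset_closure (hlS a (Multiset.mem_toFinset.mp ha))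
            exact nsmul_nonneg (hBnonneg a haB) _
          have hspos : 0 < (s : ℝ) :=
            lt_of_le_of_ne (hBnonneg _ (hS ▸ AddSubmonoid.subset_closure (hlS _ hsl))) (Ne.symm h0)
          have hδs : δ₀ ≤ (s : ℝ) := hδ₀le _ s.2 h0
          have h1 : (l.count (s : ℝ) : ℝ) * (s:ℝ) ≤ C := by
            rw [hlsum] at hterm
            calc (l.count (s:ℝ) : ℝ) * (s:ℝ) = l.count (s:ℝ) • (s:ℝ) := by
                  rw [nsmul_eq_mul]
              _ ≤ x := hterm
              _ ≤ C := hxC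
          have h2 : (l.count (s : ℝ) : ℝ) ≤ C / δ₀ := by
            rw [le_div_iff₀ hδ₀pos]
            calc (l.count (s:ℝ) : ℝ) * δ₀ ≤ (l.count (s:ℝ) : ℝ) * (s:ℝ) :=
                  mul_le_mul_of_nonneg_left hδs (Nat.cast_nonneg _)
              _ ≤ C := h1
          have h3 : (l.count (s:ℝ) : ℝ) ≤ (K : ℝ) := h2.trans (Nat.le_ceil _)
          exact_mod_cast h3
        · simp [Multiset.count_eq_zero_of_notMem hsl]
    · -- the sum equals x
      have e1 : ∑ s : ↥S, ((if (s : ℝ) = 0 then 0 else l.count (s : ℝ) : ℕ) : ℝ) * (s:ℝ)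
          = ∑ s : ↥S, (l.count (s:ℝ) : ℝ) * (s:ℝ) := by
        refine Finset.sum_congr rfl ?_
        intro s _
        split_ifs with h0
        · simp [h0]
        · rfl
      show (∑ s : ↥S, ((if (s : ℝ) = 0 then 0 else l.count (s : ℝ) : ℕ) : ℝ) * (s:ℝ)) = x
      rw [e1]
      have e2 : ∑ s : ↥S, (l.count (s:ℝ) : ℝ) * (s:ℝ) = ∑ s ∈ S, (l.count s : ℝ) * s :=
        Finset.sum_coe_sort S (fun s => (l.count s : ℝ) * s)
      rw [e2]
      have e3 : ∑ s ∈ S, (l.count s : ℝ) * s = ∑ s ∈ l.toFinset, (l.count s : ℝ) * s := by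
        refine (Finset.sum_subset ?_ ?_).symm
        · intro a ha
          exact hlS a (Multiset.mem_toFinset.mp ha)
        · intro a _ ha
          simp [Multiset.count_eq_zero_of_notMem (fun h => ha (Multiset.mem_toFinset.mpr h))]
      rw [e3, ← hlsum]
      simp_rw [← nsmul_eq_mul]
      exact (Finset.sum_multiset_count l).symm
  refine Set.Finite.subset (Set.Finite.image _ ?_) key
  exact Set.Finite.pi (fun _ => Set.finite_Iic K)


lemma exists_min_of_subset (B : AddSubmonoid ℝ) (hBnonneg : ∀ x ∈ B, 0 ≤ x) (hBfg : B.FG)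
    (hfin : ∀ C : ℝ, {x : ℝ | x ∈ B ∧ x ≤ C}.Finite)
    (N : Set ℝ) (hN : N ⊆ (B : Set ℝ)) (hne : N.Nonempty) :
    ∃ n₀ ∈ N, ∀ n ∈ N, n₀ ≤ n := by
  obtain ⟨n₁, hn₁⟩ := hne
  set F : Set ℝ := {x ∈ N | x ≤ n₁} with hF
  have hFfin : F.Finite := (hfin n₁).subset (fun x hx => ⟨hN hx.1, hx.2⟩)
  have hFne : F.Nonempty := ⟨n₁, hn₁, le_refl _⟩
  obtain ⟨n₀, hn₀F, hn₀min⟩ := Set.exists_min_image F id hFfin hFne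
  refine ⟨n₀, hn₀F.1, fun n hn => ?_⟩
  by_cases h : n ≤ n₁
  · exact hn₀min n ⟨hn, h⟩
  · exact le_trans (hn₀min n₁ ⟨hn₁, le_refl _⟩) (le_of_not_ge h)

lemma exists_gap (B : AddSubmonoid ℝ)
    (hfin : ∀ C : ℝ, {x : ℝ | x ∈ B ∧ x ≤ C}.Finite) (n₀ : ℝ) :
    ∃ δ : ℝ, 0 < δ ∧ δ ≤ 1 ∧ ∀ n ∈ B, n₀ < n → n₀ + δ ≤ n := by
  set G : Set ℝ := {x | (x ∈ B ∧ x ≤ n₀ + 1) ∧ n₀ < x} with hG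
  have hGfin : G.Finite := ((hfin (n₀ + 1)).subset (fun x hx => hx.1))
  rcases G.eq_empty_or_nonempty with hGe | hGne
  · refine ⟨1, one_pos, le_refl _, fun n hn hn₀n => ?_⟩
    by_contra hlt
    have hnG : n ∈ G := ⟨⟨hn, le_of_not_ge (fun h => hlt h)⟩, hn₀n⟩
    rw [hGe] at hnG
    exact hnG
  · obtain ⟨g, hgG, hgmin⟩ := Set.exists_min_image G id hGfin hGne
    refine ⟨g - n₀, by linarith [hgG.2], by linarith [hgG.1.2], fun n hn hn₀n => ?_⟩
    by_cases h : n ≤ n₀ + 1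
    · have h2 : g ≤ n := hgmin n ⟨⟨hn, h⟩, hn₀n⟩
      linarith
    · linarith [hgG.1.2, le_of_not_ge h]

lemma tendsto_aux (m : ℕ) (c : ℝ) (hc : 0 < c) :
    Tendsto (fun t : ℝ => (t ^ m)⁻¹ * Real.exp (-(t ^ 2)⁻¹) ^ c) (𝓝[>] (0:ℝ)) (𝓝 0) := by
  have h2 : Tendsto (fun t : ℝ => (t ^ 2)⁻¹) (𝓝[>] (0:ℝ)) atTop := by
    apply tendsto_inv_nhdsGT_zero.comp
    apply tendsto_nhdsWithin_of_tendsto_nhds_of_eventually_within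
    · have : Tendsto (fun t : ℝ => t ^ 2) (𝓝 (0:ℝ)) (𝓝 ((0:ℝ) ^ 2)) :=
        (continuous_pow 2).continuousAt
      simpa using this.mono_left nhdsWithin_le_nhds
    · filter_upwards [self_mem_nhdsWithin] with t ht
      exact pow_pos (show (0:ℝ) < t from ht) 2
  have key : Tendsto (fun u : ℝ => u ^ ((m:ℝ)/2) * Real.exp (-c * u)) atTop (𝓝 0) :=
    tendsto_rpow_mul_exp_neg_mul_atTop_nhds_zero _ c hc
  have := key.comp h2
  apply this.congr'
  filter_upwards [self_mem_nhdsWithin] with t ht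
  have ht' : (0:ℝ) < t := ht
  have e1 : ((t ^ 2)⁻¹) ^ ((m:ℝ)/2) = (t ^ m)⁻¹ := by
    rw [Real.inv_rpow (by positivity)]
    congr 1
    rw [← Real.rpow_natCast t 2, ← Real.rpow_mul ht'.le,
      show ((2:ℕ):ℝ) * ((m:ℝ)/2) = (m:ℝ) by push_cast; ring, Real.rpow_natCast]
  have e2 : Real.exp (-c * (t ^ 2)⁻¹) = Real.exp (-(t ^ 2)⁻¹) ^ c := by
    rw [← Real.exp_mul]
    ring_nf
  simp only [Function.comp]
  rw [e1, e2]


lemma bound_aux {t E r n n₀ δ : ℝ} {m m₀ : ℕ} (ht : 0 < t) (hE : 0 < E) (hr : 0 < r)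
    (hr1 : r < 1) (htr : t ≤ r) (hEr : E ≤ r) (hδ : 0 < δ)
    (hb : (t ^ m₀)⁻¹ * E ^ (δ / 2) ≤ (r ^ m₀)⁻¹)
    (hcase : (n = n₀ ∧ m₀ ≤ m) ∨ n₀ + δ ≤ n) :
    t ^ m * E ^ n * (t ^ m₀ * E ^ n₀)⁻¹ ≤
      r ^ m * r ^ n * ((r ^ m₀)⁻¹ * (r ^ (n₀ + δ / 2))⁻¹) := by
  have hEn₀ : (0:ℝ) < E ^ n₀ := Real.rpow_pos_of_pos hE _
  have htm₀ : (0:ℝ) < t ^ m₀ := pow_pos ht _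
  have hrm₀ : (0:ℝ) < r ^ m₀ := pow_pos hr _
  rcases hcase with ⟨rfl, hm⟩ | hn
  · -- n = n₀, m₀ ≤ m
    have lhs_eq : t ^ m * E ^ n * (t ^ m₀ * E ^ n)⁻¹ = t ^ (m - m₀) := by
      rw [pow_sub₀ t ht.ne' hm]
      field_simp
    have rhs_eq : r ^ m * r ^ n * ((r ^ m₀)⁻¹ * (r ^ (n + δ / 2))⁻¹)
        = r ^ (m - m₀) * r ^ (-(δ / 2)) := by
      have h1 : r ^ n ≠ 0 := (Real.rpow_pos_of_pos hr _).ne'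
      have h2 : (r:ℝ) ^ (δ/2) ≠ 0 := (Real.rpow_pos_of_pos hr _).ne'
      rw [pow_sub₀ r hr.ne' hm, Real.rpow_neg hr.le, Real.rpow_add hr]
      field_simp
    rw [lhs_eq, rhs_eq]
    have h1 : t ^ (m - m₀) ≤ r ^ (m - m₀) := pow_le_pow_left₀ ht.le htr _
    have h2 : (1:ℝ) ≤ r ^ (-(δ / 2)) :=
      Real.one_le_rpow_of_pos_of_le_one_of_nonpos hr hr1.le (by linarith)
    calc t ^ (m - m₀) ≤ r ^ (m - m₀) := h1
      _ = r ^ (m - m₀) * 1 := (mul_one _).symm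
      _ ≤ r ^ (m - m₀) * r ^ (-(δ / 2)) := by
          exact mul_le_mul_of_nonneg_left h2 (pow_nonneg hr.le _)
  · -- n₀ + δ ≤ n
    have lhs_eq : t ^ m * E ^ n * (t ^ m₀ * E ^ n₀)⁻¹
        = t ^ m * ((t ^ m₀)⁻¹ * E ^ (δ / 2)) * E ^ (n - n₀ - δ / 2) := by
      rw [show n = n₀ + δ / 2 + (n - n₀ - δ / 2) by ring, Real.rpow_add hE,
        Real.rpow_add hE]
      field_simp
      ring
    have rhs_eq : r ^ m * r ^ n * ((r ^ m₀)⁻¹ * (r ^ (n₀ + δ / 2))⁻¹)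
        = r ^ m * (r ^ m₀)⁻¹ * r ^ (n - n₀ - δ / 2) := by
      rw [show n = n₀ + δ / 2 + (n - n₀ - δ / 2) by ring, Real.rpow_add hr]
      have : (0:ℝ) < r ^ (n₀ + δ / 2) := Real.rpow_pos_of_pos hr _
      field_simp
      ring
    rw [lhs_eq, rhs_eq]
    have h3 : E ^ (n - n₀ - δ / 2) ≤ r ^ (n - n₀ - δ / 2) :=
      Real.rpow_le_rpow hE.le hEr (by linarith)
    have h1 : t ^ m ≤ r ^ m := pow_le_pow_left₀ ht.le htr _
    exact mul_le_mul (mul_le_mul h1 hb (by positivity) (by positivity)) h3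
      (by positivity) (by positivity)


/-- Rigidity of convergent series indexed by `ℕ × B`, where `B` is a finitely generated
additive submonoid of `ℝ_{≥0}`: if the series `F(t₁,t₂) = ∑ a(m,n) t₁^m t₂^n`
absolutely converges for some `0 < r < 1`, and `F(t, exp(−t^{−2})) = 0` for all
sufficiently small `t` in a set `T ⊆ ℝ_{>0}` whose closure contains `0`,
then all coefficients `a(m,n)` vanish. -/
theorem coeffs_eq_zero_of_vanishing_along_exp
    (B : AddSubmonoid ℝ) (hBnonneg : ∀ x ∈ B, 0 ≤ x) (hBfg : B.FG)
    (a : ℕ × B → ℂ)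
    (hconv : ∃ r : ℝ, 0 < r ∧ r < 1 ∧
      Summable (fun p : ℕ × B => ‖a p‖ * r ^ p.1 * r ^ (p.2 : ℝ)))
    (hvan : ∃ T : Set ℝ, T ⊆ Set.Ioi (0 : ℝ) ∧ (0 : ℝ) ∈ closure T ∧
      ∃ ε : ℝ, 0 < ε ∧ ∀ t ∈ T, t < ε →
        HasSum (fun p : ℕ × B =>
          a p * ((t ^ p.1 * Real.exp (-(t ^ 2)⁻¹) ^ (p.2 : ℝ) : ℝ) : ℂ)) 0) :
    ∀ p : ℕ × B, a p = 0 := by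
  classical
  obtain ⟨r, hr0, hr1, hsum⟩ := hconv
  obtain ⟨T, hTpos, hT0, ε, hε, hvanish⟩ := hvan
  have hfin := bdd_finite B hBnonneg hBfg
  by_contra hcon
  push_neg at hcon
  obtain ⟨p₁, hp₁⟩ := hcon
  set N : Set ℝ := {x | ∃ q : ℕ × B, (q.2 : ℝ) = x ∧ a q ≠ 0} with hN
  have hNsub : N ⊆ (B : Set ℝ) := by rintro x ⟨q, rfl, _⟩; exact q.2.2
  obtain ⟨n₀, hn₀N, hn₀min⟩ := exists_min_of_subset B hBnonneg hBfg hfin N hNsub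
    ⟨(p₁.2 : ℝ), p₁, rfl, hp₁⟩
  obtain ⟨q₁, hq₁, hq₁ne⟩ := hn₀N
  have hmex : ∃ m, a (m, q₁.2) ≠ 0 := ⟨q₁.1, by simpa using hq₁ne⟩
  set nb : B := q₁.2 with hnbdef
  set m₀ : ℕ := Nat.find hmex with hm₀def
  have ha₀ : a (m₀, nb) ≠ 0 := Nat.find_spec hmex
  have hn₀B : n₀ ∈ B := hNsub ⟨q₁, hq₁, hq₁ne⟩
  have hnb' : (nb : ℝ) = n₀ := hq₁
  have hn₀0 : 0 ≤ n₀ := hBnonneg _ hn₀B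
  obtain ⟨δ, hδ0, hδ1, hgap⟩ := exists_gap B hfin n₀
  -- IH-type facts
  have hlow : ∀ p : ℕ × B, (p.2 : ℝ) < n₀ → a p = 0 := by
    intro p
    contrapose!
    intro h
    exact hn₀min _ ⟨p, rfl, h⟩
  have hlow2 : ∀ m, m < m₀ → a (m, nb) = 0 := by
    intro m hm
    by_contra h
    exact Nat.find_min hmex hm h
  -- the filter
  set l : Filter ℝ := 𝓝[T] (0 : ℝ) with hl
  have hlne : l.NeBot := mem_closure_iff_nhdsWithin_neBot.mp hT0
  have hlle : l ≤ 𝓝[>] (0 : ℝ) := nhdsWithin_mono 0 hTpos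
  -- abbreviations
  set E : ℝ → ℝ := fun t => Real.exp (-(t ^ 2)⁻¹) with hEdef
  set D : ℝ → ℝ := fun t => t ^ m₀ * E t ^ (n₀ : ℝ) with hDdef
  set f : ℝ → ℕ × B → ℂ := fun t p =>
    a p * ((t ^ p.1 * E t ^ ((p.2 : B) : ℝ) : ℝ) : ℂ) * (((D t)⁻¹ : ℝ) : ℂ) with hfdef
  set g : ℕ × B → ℂ := fun p => if p = (m₀, nb) then a p else 0 with hgdef
  set Cc : ℝ := (r ^ m₀)⁻¹ * (r ^ (n₀ + δ / 2))⁻¹ with hCcdef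
  have hEpos : ∀ t : ℝ, 0 < E t := fun t => Real.exp_pos _
  have hDpos : ∀ t : ℝ, 0 < t → 0 < D t := fun t ht =>
    mul_pos (pow_pos ht _) (Real.rpow_pos_of_pos (hEpos t) _)
  -- pointwise convergence
  have hab : ∀ p : ℕ × B, Tendsto (f · p) l (𝓝 (g p)) := by
    intro p
    rcases eq_or_ne (a p) 0 with hap | hap
    · have hfz : (f · p) = fun _ => (0 : ℂ) := by
        funext t; simp [hfdef, hap]
      have hgz : g p = 0 := by
        rw [hgdef]; dsimp only; split_ifs <;> simp [hap]
      rw [hfz, hgz]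
      exact tendsto_const_nhds
    · have hge : n₀ ≤ (p.2 : ℝ) := le_of_not_gt fun h => hap (hlow p h)
      by_cases hn : (p.2 : ℝ) = n₀
      · -- p.2 = nb
        have hp2 : p.2 = nb := Subtype.ext (by rw [hn, hnb'])
        have hm : m₀ ≤ p.1 := by
          by_contra h
          apply hap
          have h0 : a (p.1, nb) = 0 := hlow2 p.1 (lt_of_not_ge h)
          rw [← hp2] at h0
          rwa [Prod.mk.eta] at h0
        rcases eq_or_lt_of_le hm with hmeq | hmlt
        · -- p = (m₀, nb) : constant
          have hpeq : p = (m₀, nb) := Prod.ext hmeq.symm hp2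
          have hgp : g p = a p := by rw [hgdef]; simp [hpeq]
          rw [hgp]
          apply Tendsto.congr' _ (tendsto_const_nhds (x := a p))
          filter_upwards [hlle self_mem_nhdsWithin] with t ht
          have htpos : (0 : ℝ) < t := ht
          have hDne : D t ≠ 0 := (hDpos t htpos).ne'
          have hnum : (t ^ p.1 * E t ^ ((p.2 : B) : ℝ) : ℝ) = D t := by
            rw [hDdef, hpeq]; dsimp only; rw [hnb']
          rw [hfdef]; dsimp only
          rw [hnum, mul_assoc, ← Complex.ofReal_mul, mul_inv_cancel₀ hDne,
            Complex.ofReal_one, mul_one]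
        · -- p.1 > m₀ : tends to 0
          have hpne : p ≠ (m₀, nb) := by
            intro h
            rw [h] at hmlt
            simp at hmlt
          have hgp : g p = 0 := by
            rw [hgdef]; dsimp only
            rw [if_neg hpne]
          rw [hgp]
          have hreal : Tendsto (fun t : ℝ => t ^ (p.1 - m₀)) l (𝓝 0) := by
            have : Tendsto (fun t : ℝ => t ^ (p.1 - m₀)) (𝓝 0) (𝓝 ((0:ℝ) ^ (p.1 - m₀))) :=
              (continuous_pow _).continuousAt
            rw [zero_pow (by omega)] at this
            exact this.mono_left (hlle.trans nhdsWithin_le_nhds)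
          have hlim : Tendsto (fun t : ℝ => a p * ((t ^ (p.1 - m₀) : ℝ) : ℂ)) l (𝓝 0) := by
            have := (Complex.continuous_ofReal.tendsto 0).comp hreal
            simpa using this.const_mul (a p)
          apply Tendsto.congr' _ hlim
          filter_upwards [hlle self_mem_nhdsWithin] with t ht
          have htpos : (0 : ℝ) < t := ht
          have hDne : D t ≠ 0 := (hDpos t htpos).ne'
          have hnum : (t ^ p.1 * E t ^ ((p.2 : B) : ℝ) : ℝ) * (D t)⁻¹ = t ^ (p.1 - m₀) := by
            rw [hDdef]; dsimp only
            rw [hp2, hnb', pow_sub₀ t htpos.ne' hm]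
            have h1 : E t ^ (n₀ : ℝ) ≠ 0 := (Real.rpow_pos_of_pos (hEpos t) _).ne'
            field_simp
            all_goals ring
          rw [hfdef]; dsimp only
          rw [mul_assoc, ← Complex.ofReal_mul, hnum]
      · -- (p.2 : ℝ) > n₀
        have hn' : n₀ < (p.2 : ℝ) := lt_of_le_of_ne hge (Ne.symm hn)
        have hgp : g p = 0 := by
          rw [hgdef]; dsimp only
          rw [if_neg (fun h => hn (by rw [h]; exact hnb'))]
        rw [hgp]
        set c : ℝ := (p.2 : ℝ) - n₀ with hcdef
        have hc : 0 < c := by rw [hcdef]; linarith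
        have hreal : Tendsto (fun t : ℝ => t ^ p.1 * ((t ^ m₀)⁻¹ * E t ^ c)) l (𝓝 0) := by
          have h1 : Tendsto (fun t : ℝ => t ^ p.1) (𝓝[>] (0:ℝ)) (𝓝 ((0:ℝ) ^ p.1)) :=
            ((continuous_pow _).continuousAt).mono_left nhdsWithin_le_nhds
          have h2 := tendsto_aux m₀ c hc
          have := h1.mul h2
          rw [mul_zero] at this
          exact this.mono_left hlle
        have hlim : Tendsto (fun t : ℝ =>
            a p * ((t ^ p.1 * ((t ^ m₀)⁻¹ * E t ^ c) : ℝ) : ℂ)) l (𝓝 0) := by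
          have := (Complex.continuous_ofReal.tendsto 0).comp hreal
          simpa using this.const_mul (a p)
        apply Tendsto.congr' _ hlim
        filter_upwards [hlle self_mem_nhdsWithin] with t ht
        have htpos : (0 : ℝ) < t := ht
        have hnum : (t ^ p.1 * E t ^ ((p.2 : B) : ℝ) : ℝ) * (D t)⁻¹
            = t ^ p.1 * ((t ^ m₀)⁻¹ * E t ^ c) := by
          rw [hDdef]; dsimp only
          rw [hcdef, Real.rpow_sub (hEpos t)]
          have h1 : E t ^ (n₀ : ℝ) ≠ 0 := (Real.rpow_pos_of_pos (hEpos t) _).ne'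
          have h2 : (t:ℝ) ^ m₀ ≠ 0 := (pow_pos htpos _).ne'
          field_simp
          all_goals ring
        rw [hfdef]; dsimp only
        rw [mul_assoc, ← Complex.ofReal_mul, hnum]
  -- summable bound
  have hbound0 : Summable (fun p : ℕ × B =>
      ‖a p‖ * r ^ p.1 * r ^ ((p.2 : B) : ℝ) * Cc) := hsum.mul_right Cc
  -- uniform bound
  have h_bound : ∀ᶠ t in l, ∀ p : ℕ × B,
      ‖f t p‖ ≤ ‖a p‖ * r ^ p.1 * r ^ ((p.2 : B) : ℝ) * Cc := by
    have h1 : ∀ᶠ t in 𝓝[>] (0:ℝ), t < r :=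
      nhdsWithin_le_nhds (Iio_mem_nhds hr0)
    have hEten : Tendsto E (𝓝[>] (0:ℝ)) (𝓝 0) := by
      have := tendsto_aux 0 1 one_pos
      apply this.congr
      intro t
      simp [Real.rpow_one, hEdef]
    have h2 : ∀ᶠ t in 𝓝[>] (0:ℝ), E t < r := hEten.eventually_lt_const hr0
    have h3 : ∀ᶠ t in 𝓝[>] (0:ℝ), (t ^ m₀)⁻¹ * E t ^ (δ / 2) < (r ^ m₀)⁻¹ :=
      (tendsto_aux m₀ (δ / 2) (half_pos hδ0)).eventually_lt_const (by positivity)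
    filter_upwards [hlle h1, hlle h2, hlle h3, hlle self_mem_nhdsWithin]
      with t htr hEr hb ht
    have htpos : (0 : ℝ) < t := ht
    intro p
    have hnorm : ‖f t p‖ =
        ‖a p‖ * (t ^ p.1 * E t ^ ((p.2 : B) : ℝ) * (D t)⁻¹) := by
      rw [hfdef]; dsimp only
      rw [norm_mul, norm_mul, Complex.norm_real, Complex.norm_real,
        Real.norm_eq_abs, Real.norm_eq_abs,
        abs_of_nonneg (by positivity : (0:ℝ) ≤ t ^ p.1 * E t ^ ((p.2 : B) : ℝ)),
        abs_of_nonneg (by positivity : (0:ℝ) ≤ (D t)⁻¹), mul_assoc]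
    rw [hnorm]
    rcases eq_or_ne (a p) 0 with hap | hap
    · simp [hap]
    · have hge : n₀ ≤ (p.2 : ℝ) := le_of_not_gt fun h => hap (hlow p h)
      have hcase : ((p.2 : ℝ) = n₀ ∧ m₀ ≤ p.1) ∨ n₀ + δ ≤ (p.2 : ℝ) := by
        by_cases hn : (p.2 : ℝ) = n₀
        · left
          refine ⟨hn, ?_⟩
          by_contra h
          apply hap
          have hp2 : p.2 = nb := Subtype.ext (by rw [hn, hnb'])
          have h0 : a (p.1, nb) = 0 := hlow2 p.1 (lt_of_not_ge h)
          rw [← hp2] at h0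
          rwa [Prod.mk.eta] at h0
        · right
          exact hgap _ p.2.2 (lt_of_le_of_ne hge (Ne.symm hn))
      have key := bound_aux htpos (hEpos t) hr0 hr1 htr.le hEr.le hδ0 hb.le hcase
      calc ‖a p‖ * (t ^ p.1 * E t ^ ((p.2 : B) : ℝ) * (D t)⁻¹)
          ≤ ‖a p‖ * (r ^ p.1 * r ^ ((p.2 : B) : ℝ) * Cc) := by
            refine mul_le_mul_of_nonneg_left ?_ (norm_nonneg _)
            rw [hDdef, hCcdef] at *
            exact key
        _ = ‖a p‖ * r ^ p.1 * r ^ ((p.2 : B) : ℝ) * Cc := by ring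
  -- main convergence
  have main := tendsto_tsum_of_dominated_convergence hbound0 hab h_bound
  -- tsum of g
  have htsumg : (∑' p, g p) = a (m₀, nb) := by
    have hgeq : g = fun p => if p = (m₀, nb) then a (m₀, nb) else 0 := by
      funext p
      rw [hgdef]; dsimp only
      split_ifs with h
      · rw [h]
      · rfl
    rw [hgeq]
    exact tsum_ite_eq (m₀, nb) (fun _ => a (m₀, nb))
  -- eventually the sum is 0
  have hzero : (fun t => ∑' p, f t p) =ᶠ[l] fun _ => (0 : ℂ) := by
    have hmemT : ∀ᶠ t in l, t ∈ T := self_mem_nhdsWithin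
    have hmemε : ∀ᶠ t in l, t < ε := nhdsWithin_le_nhds (Iio_mem_nhds hε)
    filter_upwards [hmemT, hmemε] with t htT htε
    have h := (hvanish t htT htε).mul_right (((D t)⁻¹ : ℝ) : ℂ)
    rw [zero_mul] at h
    exact h.tsum_eq
  have hfinal : Tendsto (fun _ : ℝ => (0 : ℂ)) l (𝓝 (a (m₀, nb))) := by
    rw [← htsumg]
    exact Tendsto.congr' hzero main
  exact ha₀ (tendsto_nhds_unique hfinal tendsto_const_nhds)
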